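/- The matrices A = [[1,2],[0,1]] and B = [[1,0],[2,1]] generate a free subgroup of rank 2 in SL(2, Z). -/

import Mathlib

open Matrix Monoid Pointwise

noncomputable instance sanovAction : MulAction (Matrix.SpecialLinearGroup (Fin 2) ℤ) (Fin 2 → ℤ) where
  smul g v := g.val.mulVec v
  one_smul v := by show (1 : Matrix.SpecialLinearGroup (Fin 2) ℤ).val.mulVec v = v; simp
  mul_smul g h v := by
    show (g * h).val.mulVec v = g.val.mulVec (h.val.mulVec v)
    rw [Matrix.SpecialLinearGroup.coe_mul, Matrix.mulVec_mulVec]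

lemma sanov_smul_def (g : Matrix.SpecialLinearGroup (Fin 2) ℤ) (v : Fin 2 → ℤ) :
    g • v = g.val.mulVec v := rfl

def sanovX : Bool → Set (Fin 2 → ℤ) :=
  fun b => if b then {v | |v 1| < |v 0|} else {v | |v 0| < |v 1|}

lemma sanovX_true : sanovX true = {v | |v 1| < |v 0|} := rfl
lemma sanovX_false : sanovX false = {v | |v 0| < |v 1|} := rfl

lemma Apow_smul (A : Matrix.SpecialLinearGroup (Fin 2) ℤ)
    (hA : A.val = !![1, 2; 0, 1]) (n : ℤ) (v : Fin 2 → ℤ) :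
    (A ^ n) • v = ![v 0 + 2 * n * v 1, v 1] := by
  have hsm : ∀ w : Fin 2 → ℤ, A • w = ![w 0 + 2 * w 1, w 1] := by
    intro w
    rw [sanov_smul_def, hA]
    ext i
    fin_cases i <;> simp [Matrix.mulVec, dotProduct, Fin.sum_univ_two] <;> ring
  have hAinv : A⁻¹.val = !![1, -2; 0, 1] := by
    have h := congrArg Subtype.val (Matrix.SpecialLinearGroup.SL2_inv_expl A)
    rw [h]
    show ![![A.val 1 1, -A.val 0 1], ![-A.val 1 0, A.val 0 0]] = !![1, -2; 0, 1]
    rw [hA]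
    ext i j
    fin_cases i <;> fin_cases j <;> simp
  have hsmInv : ∀ w : Fin 2 → ℤ, A⁻¹ • w = ![w 0 - 2 * w 1, w 1] := by
    intro w
    rw [sanov_smul_def, hAinv]
    ext i
    fin_cases i <;> simp [Matrix.mulVec, dotProduct, Fin.sum_univ_two] <;> ring
  induction n using Int.induction_on generalizing v with
  | zero => simp; ext i; fin_cases i <;> simp
  | succ k ih =>
      have h1 : A ^ ((k : ℤ) + 1) • v = A ^ (k : ℤ) • (A • v) := by
        rw [_root_.zpow_add, zpow_one, SemigroupAction.mul_smul]
      rw [h1, hsm, ih]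
      ext i; fin_cases i <;> simp <;> ring
  | pred k ih =>
      have h1 : A ^ (-(k : ℤ) - 1) • v = A ^ (-(k : ℤ)) • (A⁻¹ • v) := by
        rw [_root_.zpow_sub, zpow_one, SemigroupAction.mul_smul]
      rw [h1, hsmInv, ih]
      ext i; fin_cases i <;> simp <;> ring

lemma Bpow_smul (B : Matrix.SpecialLinearGroup (Fin 2) ℤ)
    (hB : B.val = !![1, 0; 2, 1]) (n : ℤ) (v : Fin 2 → ℤ) :
    (B ^ n) • v = ![v 0, v 1 + 2 * n * v 0] := by
  have hsm : ∀ w : Fin 2 → ℤ, B • w = ![w 0, w 1 + 2 * w 0] := by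
    intro w
    rw [sanov_smul_def, hB]
    ext i
    fin_cases i <;> simp [Matrix.mulVec, dotProduct, Fin.sum_univ_two] <;> ring
  have hBinv : B⁻¹.val = !![1, 0; -2, 1] := by
    have h := congrArg Subtype.val (Matrix.SpecialLinearGroup.SL2_inv_expl B)
    rw [h]
    show ![![B.val 1 1, -B.val 0 1], ![-B.val 1 0, B.val 0 0]] = !![1, 0; -2, 1]
    rw [hB]
    ext i j
    fin_cases i <;> fin_cases j <;> simp
  have hsmInv : ∀ w : Fin 2 → ℤ, B⁻¹ • w = ![w 0, w 1 - 2 * w 0] := by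
    intro w
    rw [sanov_smul_def, hBinv]
    ext i
    fin_cases i <;> simp [Matrix.mulVec, dotProduct, Fin.sum_univ_two] <;> ring
  induction n using Int.induction_on generalizing v with
  | zero => simp; ext i; fin_cases i <;> simp
  | succ k ih =>
      have h1 : B ^ ((k : ℤ) + 1) • v = B ^ (k : ℤ) • (B • v) := by
        rw [_root_.zpow_add, zpow_one, SemigroupAction.mul_smul]
      rw [h1, hsm, ih]
      ext i; fin_cases i <;> simp <;> ring
  | pred k ih =>
      have h1 : B ^ (-(k : ℤ) - 1) • v = B ^ (-(k : ℤ)) • (B⁻¹ • v) := by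
        rw [_root_.zpow_sub, zpow_one, SemigroupAction.mul_smul]
      rw [h1, hsmInv, ih]
      ext i; fin_cases i <;> simp <;> ring

lemma sanov_abs (x y n : ℤ) (hn : n ≠ 0) (h : |x| < |y|) : |y| < |x + 2 * n * y| := by
  have h1 : 1 ≤ |n| := Int.one_le_abs hn
  have h2 : |2 * n * y| = 2 * |n| * |y| := by rw [abs_mul, abs_mul]; simp
  have h3 : |2 * n * y| - |x| ≤ |x + 2 * n * y| := by
    have h4 := abs_sub_abs_le_abs_sub (2 * n * y) (-x)
    simp only [abs_neg, sub_neg_eq_add] at h4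
    rw [show 2 * n * y + x = x + 2 * n * y from by ring] at h4
    linarith
  nlinarith [abs_nonneg y, abs_nonneg x]

theorem stmt6
    (A B : Matrix.SpecialLinearGroup (Fin 2) ℤ)
    (hA : A.val = !![1, 2; 0, 1]) (hB : B.val = !![1, 0; 2, 1]) :
    Function.Injective (FreeGroup.lift (fun x : Bool => if x then A else B)) := by
  set a : Bool → Matrix.SpecialLinearGroup (Fin 2) ℤ := fun x => if x then A else B with ha
  have heq : FreeGroup.lift a =
      (Monoid.CoprodI.lift fun i : Bool => FreeGroup.lift fun _ : Unit => a i).comp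
        (@freeGroupEquivCoprodI Bool).toMonoidHom := by
    ext i
    simp
  rw [heq, MonoidHom.coe_comp]
  refine Function.Injective.comp ?_ (MulEquiv.injective freeGroupEquivCoprodI)
  have hcard : 3 ≤ Cardinal.mk Bool ∨ ∃ _i : Bool, 3 ≤ Cardinal.mk (FreeGroup Unit) := by
    right
    refine ⟨true, ?_⟩
    have h := Cardinal.infinite_iff.mp (inferInstance : Infinite (FreeGroup Unit))
    exact le_trans (by exact_mod_cast (Cardinal.nat_lt_aleph0 3).le) h
  have hXne : ∀ i, (sanovX i).Nonempty := by
    intro b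
    cases b
    · exact ⟨![0, 1], by simp [sanovX_false]⟩
    · exact ⟨![1, 0], by simp [sanovX_true]⟩
  have hXd : Pairwise (Function.onFun Disjoint sanovX) := by
    intro i j hij
    simp only [Function.onFun]
    rw [Set.disjoint_left]
    intro v hv hv'
    cases i <;> cases j
    · exact hij rfl
    · rw [sanovX_false, Set.mem_setOf_eq] at hv
      rw [sanovX_true, Set.mem_setOf_eq] at hv'
      omega
    · rw [sanovX_true, Set.mem_setOf_eq] at hv
      rw [sanovX_false, Set.mem_setOf_eq] at hv'
      omega
    · exact hij rfl
  have hpp : Pairwise fun i j => ∀ h : FreeGroup Unit, h ≠ 1 →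
      (FreeGroup.lift fun _ : Unit => a i) h • sanovX j ⊆ sanovX i := by
    intro i j hij
    refine FreeGroup.freeGroupUnitEquivInt.forall_congr_left.mpr ?_
    intro n hne1
    have hnne0 : n ≠ 0 := by
      rintro rfl
      apply hne1
      simp [FreeGroup.freeGroupUnitEquivInt]
    change FreeGroup.lift (fun _ => a i) (FreeGroup.of () ^ n) • sanovX j ⊆ sanovX i
    simp only [map_zpow, FreeGroup.lift_apply_of]
    rintro x ⟨v, hv, rfl⟩
    cases i
    · -- i = false : B, j = true
      have hj : j = true := by
        cases j
        · exact absurd rfl hij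
        · rfl
      subst hj
      rw [sanovX_true, Set.mem_setOf_eq] at hv
      show a false ^ n • v ∈ sanovX false
      rw [sanovX_false, Set.mem_setOf_eq]
      have haf : a false = B := by simp [ha]
      rw [haf, Bpow_smul B hB n v]
      show |(![v 0, v 1 + 2 * n * v 0]) 0| < |(![v 0, v 1 + 2 * n * v 0]) 1|
      simp only [Matrix.cons_val_zero, Matrix.cons_val_one, Matrix.head_cons]
      exact sanov_abs (v 1) (v 0) n hnne0 hv
    · -- i = true : A, j = false
      have hj : j = false := by
        cases j
        · rfl
        · exact absurd rfl hij
      subst hj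
      rw [sanovX_false, Set.mem_setOf_eq] at hv
      show a true ^ n • v ∈ sanovX true
      rw [sanovX_true, Set.mem_setOf_eq]
      have hat : a true = A := by simp [ha]
      rw [hat, Apow_smul A hA n v]
      show |(![v 0 + 2 * n * v 1, v 1]) 1| < |(![v 0 + 2 * n * v 1, v 1]) 0|
      simp only [Matrix.cons_val_zero, Matrix.cons_val_one, Matrix.head_cons]
      exact sanov_abs (v 0) (v 1) n hnne0 hv
  exact Monoid.CoprodI.lift_injective_of_ping_pong _ hcard sanovX hXne hXd hpp
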